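/- For all b ≥ 2, all distinct x, y ∈ {1,...,b-1}, all ℓ ≥ 1, and all r with 0 ≤ r < b^{ℓ-1}, one has S_b(x·b^ℓ + y·b^{ℓ-1} + r) = S_b(x·b^{ℓ-1} + r) + 2·S_b(y·b^{ℓ-1} + r) − 2·S_b(r). -/

import Mathlib

/-- Number of distinct words in `L_b` (no leading zero, or empty) occurring as
scattered subwords (subsequences) of `u`. -/
def lbCount (u : List ℕ) : ℕ :=
  ((u.sublists.filter (fun v => v.head? ≠ some 0)).dedup).length

/-- `S_b(n)`: number of distinct words of `L_b` occurring as scattered subwords of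
the base-`b` expansion of `n` (most significant digit first, `rep_b(0) = ε`). -/
def Sb (b n : ℕ) : ℕ := lbCount ((Nat.digits b n).reverse)

/-- Summatory function `A_b(n) = ∑_{j<n} S_b(j)`. -/
def Asum (b n : ℕ) : ℕ := ∑ j ∈ Finset.range n, Sb b j

namespace Stmt7Aux

/-- The finset of scattered subwords of `w`. -/
def F (w : List ℕ) : Finset (List ℕ) := w.sublists.toFinset

lemma mem_F {v w : List ℕ} : v ∈ F w ↔ v.Sublist w := by
  simp [F, List.mem_sublists]

/-- Number of distinct subwords. -/
def dd (w : List ℕ) : ℕ := (F w).card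

/-- Number of distinct subwords starting with `a`. -/
def cc (a : ℕ) (w : List ℕ) : ℕ := ((F w).filter (fun v => v.head? = some a)).card

/-- Number of distinct subwords not starting with `0`. -/
def lb (w : List ℕ) : ℕ := ((F w).filter (fun v => v.head? ≠ some 0)).card

lemma lbCount_eq (u : List ℕ) : lbCount u = lb u := by
  rw [lbCount, ← List.card_toFinset, List.toFinset_filter, lb]
  congr 1
  ext v
  simp [F]

lemma sublist_cons_iff' {v w : List ℕ} {a : ℕ} :
    v.Sublist (a :: w) ↔ v.Sublist w ∨ ∃ s, s.Sublist w ∧ v = a :: s := by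
  constructor
  · intro h
    cases h with
    | cons _ h => exact Or.inl h
    | cons_cons _ h => exact Or.inr ⟨_, h, rfl⟩
  · rintro (h | ⟨s, hs, rfl⟩)
    · exact h.cons _
    · exact hs.cons₂ _

lemma F_cons (a : ℕ) (w : List ℕ) :
    F (a :: w) = F w ∪ (F w).image (a :: ·) := by
  ext v
  simp only [mem_F, Finset.mem_union, Finset.mem_image, mem_F]
  rw [sublist_cons_iff']
  constructor
  · rintro (h | ⟨s, hs, rfl⟩)
    · exact Or.inl h
    · exact Or.inr ⟨s, hs, rfl⟩
  · rintro (h | ⟨s, hs, rfl⟩)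
    · exact Or.inl h
    · exact Or.inr ⟨s, hs, rfl⟩

lemma cons_inj (a : ℕ) : Function.Injective (a :: · : List ℕ → List ℕ) := by
  intro s t h; injection h

lemma inter_image (a : ℕ) (w : List ℕ) :
    F w ∩ (F w).image (a :: ·) = (F w).filter (fun v => v.head? = some a) := by
  ext v
  simp only [Finset.mem_inter, Finset.mem_image, Finset.mem_filter]
  constructor
  · rintro ⟨hv, s, hs, rfl⟩
    exact ⟨hv, rfl⟩
  · rintro ⟨hv, hh⟩
    cases v with
    | nil => simp at hh
    | cons h t =>
      simp only [List.head?_cons, Option.some.injEq] at hh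
      subst hh
      exact ⟨hv, t, mem_F.mpr ((List.sublist_cons_self _ _).trans (mem_F.mp hv)), rfl⟩

lemma dd_cons (a : ℕ) (w : List ℕ) : dd (a :: w) + cc a w = 2 * dd w := by
  have h := Finset.card_union_add_card_inter (F w) ((F w).image (a :: ·))
  rw [inter_image, Finset.card_image_of_injective _ (cons_inj a)] at h
  simp only [dd, cc, F_cons]
  omega

lemma lb_cons (a : ℕ) (ha : a ≠ 0) (w : List ℕ) :
    lb (a :: w) + cc a w = lb w + dd w := by
  have himg : ((F w).image (a :: ·)).filter (fun v => v.head? ≠ some 0)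
      = (F w).image (a :: ·) := by
    apply Finset.filter_true_of_mem
    rintro v hv
    rcases Finset.mem_image.mp hv with ⟨s, hs, rfl⟩
    simp [ha]
  have hinter : ((F w).filter (fun v => v.head? ≠ some 0)) ∩ ((F w).image (a :: ·))
      = (F w).filter (fun v => v.head? = some a) := by
    ext v
    simp only [Finset.mem_inter, Finset.mem_filter, Finset.mem_image]
    constructor
    · rintro ⟨⟨hv, _⟩, s, hs, rfl⟩
      exact ⟨hv, rfl⟩
    · rintro ⟨hv, hh⟩
      cases v with
      | nil => simp at hh
      | cons h t =>
        simp only [List.head?_cons, Option.some.injEq] at hh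
        subst hh
        exact ⟨⟨hv, by simp [ha]⟩, t,
          mem_F.mpr ((List.sublist_cons_self _ _).trans (mem_F.mp hv)), rfl⟩
  have h := Finset.card_union_add_card_inter
    ((F w).filter (fun v => v.head? ≠ some 0)) ((F w).image (a :: ·))
  rw [hinter, Finset.card_image_of_injective _ (cons_inj a)] at h
  simp only [lb, dd, cc, F_cons, Finset.filter_union, himg]
  omega

lemma cc_cons_ne (x a : ℕ) (hxa : x ≠ a) (w : List ℕ) : cc x (a :: w) = cc x w := by
  have himg : ((F w).image (a :: ·)).filter (fun v => v.head? = some x) = ∅ := by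
    apply Finset.filter_false_of_mem
    rintro v hv
    rcases Finset.mem_image.mp hv with ⟨s, hs, rfl⟩
    simp [Ne.symm hxa]
  rw [cc, F_cons, Finset.filter_union, himg, Finset.union_empty, cc]

lemma lb_cons_zero (w : List ℕ) : lb (0 :: w) = lb w := by
  have himg : ((F w).image (0 :: ·)).filter (fun v => v.head? ≠ some 0) = ∅ := by
    apply Finset.filter_false_of_mem
    rintro v hv
    rcases Finset.mem_image.mp hv with ⟨s, hs, rfl⟩
    simp
  rw [lb, F_cons, Finset.filter_union, himg, Finset.union_empty, lb]

lemma lb_replicate (n : ℕ) (u : List ℕ) : lb (List.replicate n 0 ++ u) = lb u := by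
  induction n with
  | zero => simp
  | succ n ih => rw [List.replicate_succ, List.cons_append, lb_cons_zero, ih]

lemma digits_single {b m : ℕ} (hb : 2 ≤ b) (hm : 1 ≤ m) (hmb : m < b) :
    Nat.digits b m = [m] := by
  rw [Nat.digits_def' (by omega : 1 < b) (by omega : 0 < m),
    Nat.mod_eq_of_lt hmb, Nat.div_eq_of_lt hmb, Nat.digits_zero]

lemma digits_len_le {b r k : ℕ} (hb : 2 ≤ b) (hr : r < b ^ k) :
    (Nat.digits b r).length ≤ k := by
  rcases Nat.eq_zero_or_pos r with rfl | hr0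
  · simp
  · rw [Nat.digits_len b r (by omega) (by omega)]
    have := Nat.log_lt_of_lt_pow (by omega : r ≠ 0) hr
    omega

lemma digits_big {b m k r : ℕ} (hb : 2 ≤ b) (hm : 1 ≤ m) (hmb : m < b) (hr : r < b ^ k) :
    Nat.digits b (m * b ^ k + r)
      = Nat.digits b r ++ List.replicate (k - (Nat.digits b r).length) 0 ++ [m] := by
  have hlen := digits_len_le hb hr
  have h := Nat.digits_append_zeroes_append_digits (b := b)
    (k := k - (Nat.digits b r).length) (m := m) (n := r) (by omega) (by omega)
  rw [digits_single hb hm hmb] at h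
  rw [h]
  congr 1
  have : (Nat.digits b r).length + (k - (Nat.digits b r).length) = k := by omega
  rw [this]
  ring

end Stmt7Aux

open Stmt7Aux in
theorem stmt7 (b x y ℓ r : ℕ) (hb : 2 ≤ b) (hx : 1 ≤ x) (hxb : x < b)
    (hy : 1 ≤ y) (hyb : y < b) (hxy : x ≠ y)
    (hℓ : 1 ≤ ℓ) (hr : r < b ^ (ℓ - 1)) :
    (Sb b (x * b ^ ℓ + y * b ^ (ℓ - 1) + r) : ℤ) =
      Sb b (x * b ^ (ℓ - 1) + r) + 2 * Sb b (y * b ^ (ℓ - 1) + r) - 2 * Sb b r := by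
  set k := ℓ - 1 with hk
  have hℓk : ℓ = k + 1 := by omega
  set L := Nat.digits b r with hL
  set n0 := k - L.length with hn0
  set w := List.replicate n0 0 ++ L.reverse with hw
  have hlenL : L.length ≤ k := digits_len_le hb hr
  -- Sb b r = lb w
  have h1 : Sb b r = lb w := by
    rw [Sb, lbCount_eq, hw, lb_replicate]
  -- Sb b (x * b ^ k + r) = lb (x :: w)
  have hxw : Sb b (x * b ^ k + r) = lb (x :: w) := by
    rw [Sb, digits_big hb hx hxb hr, lbCount_eq]
    congr 1
    simp [hw, List.reverse_append, List.reverse_replicate]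
    rfl
  have hyw : Sb b (y * b ^ k + r) = lb (y :: w) := by
    rw [Sb, digits_big hb hy hyb hr, lbCount_eq]
    congr 1
    simp [hw, List.reverse_append, List.reverse_replicate]
    rfl
  -- the big number
  have hN : y * b ^ k + r < b ^ (k + 1) := by
    have h1 : y * b ^ k + r < (y + 1) * b ^ k := by nlinarith [pow_pos (by omega : 0 < b) k]
    have h2 : (y + 1) * b ^ k ≤ b * b ^ k := by
      exact Nat.mul_le_mul_right _ (by omega)
    calc y * b ^ k + r < (y + 1) * b ^ k := h1
      _ ≤ b * b ^ k := h2
      _ = b ^ (k + 1) := by ring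
  have hdigN : Nat.digits b (y * b ^ k + r)
      = L ++ List.replicate n0 0 ++ [y] := digits_big hb hy hyb hr
  have hlenN : (Nat.digits b (y * b ^ k + r)).length = k + 1 := by
    rw [hdigN]
    simp only [List.length_append, List.length_replicate, List.length_singleton]
    omega
  have hbig : Sb b (x * b ^ ℓ + y * b ^ k + r) = lb (x :: y :: w) := by
    have heq : x * b ^ ℓ + y * b ^ k + r = x * b ^ (k + 1) + (y * b ^ k + r) := by
      rw [hℓk]; ring
    rw [heq, Sb, digits_big hb hx hxb hN, hlenN, Nat.sub_self, List.replicate_zero,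
      List.append_nil, hdigN, lbCount_eq]
    congr 1
    simp [hw, List.reverse_append, List.reverse_replicate]
  rw [hbig, hxw, hyw, h1]
  -- counting identities
  have e1 := lb_cons x (by omega) (y :: w)
  have e2 := cc_cons_ne x y hxy w
  have e3 := dd_cons y w
  have e4 := lb_cons y (by omega) w
  have e5 := lb_cons x (by omega) w
  omega
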